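/- Let ε ∈ (0, 1/2) and let (a_{nm})_{n,m≥0} be nonnegative real numbers such that for some C > 0: a_{nm} ≤ C (n+1)^{−1/2} (m+1)^{−1/2} for all n, m ≥ 0, and a_{nm} ≤ C (n+1)^{−1/2−ε/2} (m+1)^{−1/2} whenever m ≥ n + n^{1/2+ε}. Then for each k the double series S_k = Σ_{n=0}^{k} Σ_{m=k+1}^{∞} a_{nm}/(m−n) converges, and S_k → 0 as k → ∞. -/

import Mathlib

set_option maxHeartbeats 1000000

open scoped BigOperators

lemma sum_rpow_le (s : ℝ) (hs0 : 0 < s) (hs1 : s < 1) (k : ℕ) :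
    ∑ n ∈ Finset.range (k+1), ((n:ℝ)+1) ^ (-s) ≤ ((k:ℝ)+1) ^ (1-s) / (1-s) := by
  have h1s : (0:ℝ) < 1 - s := by linarith
  induction k with
  | zero =>
    simp only [Finset.sum_range_one, Nat.cast_zero, zero_add, Real.one_rpow]
    rw [le_div_iff₀ h1s]
    nlinarith
  | succ k ih =>
    rw [Finset.sum_range_succ]
    set x : ℝ := (k:ℝ) + 1 with hx
    have hx0 : (0:ℝ) < x := by positivity
    have hy0 : (0:ℝ) < x + 1 := by positivity
    have hAM : x ^ (1-s) * (x+1) ^ s ≤ (1-s) * x + s * (x+1) :=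
      Real.geom_mean_le_arith_mean2_weighted h1s.le hs0.le hx0.le hy0.le (by ring)
    have hys : (0:ℝ) < (x+1) ^ s := Real.rpow_pos_of_pos hy0 s
    have hyns : (0:ℝ) < (x+1) ^ (-s) := Real.rpow_pos_of_pos hy0 (-s)
    have hmul : (x+1) ^ s * (x+1) ^ (-s) = 1 := by
      rw [← Real.rpow_add hy0]; simp
    have hy1 : (x+1) ^ (1-s) = (x+1) * (x+1) ^ (-s) := by
      nth_rewrite 2 [← Real.rpow_one (x+1)]
      rw [← Real.rpow_add hy0]; ring_nf
    have key : x ^ (1-s) + (1-s) * (x+1) ^ (-s) ≤ (x+1) ^ (1-s) := by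
      have h2 := mul_le_mul_of_nonneg_right hAM hyns.le
      rw [hy1]
      nlinarith [Real.rpow_nonneg hx0.le (1-s)]
    have hcast : ((k:ℝ)+1+1) = x + 1 := by rw [hx]
    push_cast
    rw [le_div_iff₀ h1s] at ih ⊢
    nlinarith

lemma summable_shift_rpow (c : ℝ) (hc : c < -1) :
    Summable (fun j : ℕ => ((j:ℝ)+1) ^ c) := by
  have h1 : Summable (fun n : ℕ => (n:ℝ) ^ c) := Real.summable_nat_rpow.2 hc
  have h2 := (summable_nat_add_iff 1).2 h1
  simpa using h2

lemma reflect_sum (k : ℕ) :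
    ∑ n ∈ Finset.range (k+1), ((k:ℝ)-(n:ℝ)+1) ^ (-(1:ℝ)/2)
      = ∑ n ∈ Finset.range (k+1), ((n:ℝ)+1) ^ (-(1:ℝ)/2) := by
  have h := Finset.sum_range_reflect (fun n : ℕ => ((n:ℝ)+1) ^ (-(1:ℝ)/2)) (k+1)
  rw [← h]
  apply Finset.sum_congr rfl
  intro i hi
  have hik : i ≤ k := Nat.lt_succ_iff.mp (Finset.mem_range.mp hi)
  have h2 : k + 1 - 1 - i = k - i := by omega
  rw [h2, Nat.cast_sub hik]


lemma pointwise_bound (ε β C : ℝ) (hε0 : 0 < ε) (hε2 : ε < 1/2) (hβ0 : 0 < β)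
    (hβh : β ≤ 1/8) (a : ℕ → ℕ → ℝ) (hpos : ∀ n m : ℕ, 0 ≤ a n m) (hC : 0 < C)
    (hb1 : ∀ n m : ℕ,
      a n m ≤ C * ((n : ℝ) + 1) ^ (-(1 : ℝ) / 2) * ((m : ℝ) + 1) ^ (-(1 : ℝ) / 2))
    (hb2 : ∀ n m : ℕ, (n : ℝ) + (n : ℝ) ^ ((1 : ℝ) / 2 + ε) ≤ (m : ℝ) →
      a n m ≤ C * ((n : ℝ) + 1) ^ (-(1 : ℝ) / 2 - ε / 2) * ((m : ℝ) + 1) ^ (-(1 : ℝ) / 2))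
    (k n j : ℕ) (hn : n ≤ k) :
    a n (k + 1 + j) / ((k : ℝ) + 1 + (j : ℝ) - (n : ℝ)) ≤
      C * ( ((n:ℝ)+1) ^ (-(1:ℝ)/2 - ε/2) * ((k:ℝ)+1) ^ (-((1:ℝ)/2 - β))
          + 2 * ((k:ℝ)+1) ^ (-1 + ((1:ℝ)/2+ε)*β + ((1:ℝ)/2+ε)/2)
              * ((k:ℝ) - (n:ℝ) + 1) ^ (-(1:ℝ)/2) )
        * ((j:ℝ)+1) ^ (-(1+β)) := by
  have hnk : (n:ℝ) ≤ (k:ℝ) := Nat.cast_le.2 hn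
  have hj0 : (0:ℝ) ≤ (j:ℝ) := Nat.cast_nonneg j
  have hj1 : (0:ℝ) < (j:ℝ) + 1 := by linarith
  have hD : (j:ℝ) + 1 ≤ (k:ℝ) + 1 + (j:ℝ) - (n:ℝ) := by linarith
  have hk1 : (0:ℝ) < (k:ℝ) + 1 := by positivity
  have hM1 : ((k + 1 + j : ℕ) : ℝ) + 1 = (k:ℝ) + 1 + (j:ℝ) + 1 := by push_cast; ring
  have hMpos : (0:ℝ) < (k:ℝ) + 1 + (j:ℝ) + 1 := by linarith
  have hw : (0:ℝ) < (k:ℝ) - (n:ℝ) + 1 := by linarith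
  have hG2nn : (0:ℝ) ≤ 2 * ((k:ℝ)+1) ^ (-1 + ((1:ℝ)/2+ε)*β + ((1:ℝ)/2+ε)/2)
      * ((k:ℝ) - (n:ℝ) + 1) ^ (-(1:ℝ)/2) := by
    have := Real.rpow_nonneg hw.le (-(1:ℝ)/2)
    have := Real.rpow_nonneg hk1.le (-1 + ((1:ℝ)/2+ε)*β + ((1:ℝ)/2+ε)/2)
    positivity
  have hjj : ((j:ℝ)+1) ^ (-β) / ((j:ℝ)+1) = ((j:ℝ)+1) ^ (-(1+β)) := by
    rw [div_eq_mul_inv, ← Real.rpow_neg_one ((j:ℝ)+1), ← Real.rpow_add hj1]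
    congr 1; ring
  by_cases hfar : (n:ℝ) + (n:ℝ) ^ ((1:ℝ)/2 + ε) ≤ ((k + 1 + j : ℕ) : ℝ)
  · -- far regime
    have ha := hb2 n (k+1+j) hfar
    rw [hM1] at ha
    have hsplit : ((k:ℝ)+1+(j:ℝ)+1) ^ (-(1:ℝ)/2)
        = ((k:ℝ)+1+(j:ℝ)+1) ^ (-((1:ℝ)/2 - β)) * ((k:ℝ)+1+(j:ℝ)+1) ^ (-β) := by
      rw [← Real.rpow_add hMpos]; congr 1; ring
    have h2 : ((k:ℝ)+1+(j:ℝ)+1) ^ (-((1:ℝ)/2 - β)) ≤ ((k:ℝ)+1) ^ (-((1:ℝ)/2 - β)) :=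
      Real.rpow_le_rpow_of_nonpos hk1 (by linarith) (by linarith)
    have h3 : ((k:ℝ)+1+(j:ℝ)+1) ^ (-β) ≤ ((j:ℝ)+1) ^ (-β) :=
      Real.rpow_le_rpow_of_nonpos hj1 (by linarith) (by linarith)
    have ha2 : a n (k+1+j) ≤ C * ((n:ℝ)+1) ^ (-(1:ℝ)/2 - ε/2)
        * (((k:ℝ)+1) ^ (-((1:ℝ)/2 - β)) * ((j:ℝ)+1) ^ (-β)) := by
      rw [hsplit] at ha
      calc a n (k+1+j) ≤ C * ((n:ℝ)+1) ^ (-(1:ℝ)/2 - ε/2)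
          * (((k:ℝ)+1+(j:ℝ)+1) ^ (-((1:ℝ)/2 - β)) * ((k:ℝ)+1+(j:ℝ)+1) ^ (-β)) := by
            exact ha
        _ ≤ _ := by
            apply mul_le_mul_of_nonneg_left _ (by positivity)
            exact mul_le_mul h2 h3 (Real.rpow_nonneg hMpos.le _) (Real.rpow_nonneg hk1.le _)
    calc a n (k+1+j) / ((k:ℝ)+1+(j:ℝ)-(n:ℝ))
        ≤ (C * ((n:ℝ)+1) ^ (-(1:ℝ)/2 - ε/2)
            * (((k:ℝ)+1) ^ (-((1:ℝ)/2 - β)) * ((j:ℝ)+1) ^ (-β))) / ((j:ℝ)+1) :=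
          div_le_div₀ (by positivity) ha2 hj1 hD
      _ = C * (((n:ℝ)+1) ^ (-(1:ℝ)/2 - ε/2) * ((k:ℝ)+1) ^ (-((1:ℝ)/2 - β)))
            * (((j:ℝ)+1) ^ (-β) / ((j:ℝ)+1)) := by ring
      _ = C * (((n:ℝ)+1) ^ (-(1:ℝ)/2 - ε/2) * ((k:ℝ)+1) ^ (-((1:ℝ)/2 - β)))
            * ((j:ℝ)+1) ^ (-(1+β)) := by rw [hjj]
      _ ≤ _ := by
          apply mul_le_mul_of_nonneg_right _ (Real.rpow_nonneg hj1.le _)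
          apply mul_le_mul_of_nonneg_left _ hC.le
          linarith
  · -- near regime
    push_neg at hfar
    rw [show ((k + 1 + j : ℕ) : ℝ) = (k:ℝ)+1+(j:ℝ) by push_cast; ring] at hfar
    have hσ0 : (0:ℝ) < (1:ℝ)/2 + ε := by linarith
    have hσ1 : (1:ℝ)/2 + ε ≤ 1 := by linarith
    have hDlt : (k:ℝ)+1+(j:ℝ)-(n:ℝ) < (n:ℝ) ^ ((1:ℝ)/2+ε) := by linarith
    have h1lt : (1:ℝ) < (n:ℝ) ^ ((1:ℝ)/2+ε) := by linarith
    have hn1 : (1:ℝ) ≤ (n:ℝ) := by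
      rcases Nat.eq_zero_or_pos n with h | h
      · subst h
        rw [Nat.cast_zero, Real.zero_rpow hσ0.ne'] at h1lt
        linarith
      · exact_mod_cast h
    have hσn : (n:ℝ) ^ ((1:ℝ)/2+ε) ≤ (n:ℝ) := by
      calc (n:ℝ) ^ ((1:ℝ)/2+ε) ≤ (n:ℝ) ^ (1:ℝ) :=
            Real.rpow_le_rpow_of_exponent_le hn1 hσ1
        _ = (n:ℝ) := Real.rpow_one _
    have hfa1 : ((n:ℝ)+1) ^ (-(1:ℝ)/2) ≤ (2:ℝ) ^ ((1:ℝ)/2) * ((k:ℝ)+1) ^ (-(1:ℝ)/2) := by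
      have ha' : ((k:ℝ)+1)/2 ≤ (n:ℝ)+1 := by linarith
      have h1 : ((n:ℝ)+1) ^ (-(1:ℝ)/2) ≤ (((k:ℝ)+1)/2) ^ (-(1:ℝ)/2) :=
        Real.rpow_le_rpow_of_nonpos (by positivity) ha' (by norm_num)
      have hinv : ((2:ℝ) ^ (-(1:ℝ)/2))⁻¹ = (2:ℝ) ^ ((1:ℝ)/2) := by
        rw [← Real.rpow_neg (by norm_num : (0:ℝ) ≤ 2)]; norm_num
      have h2 : (((k:ℝ)+1)/2) ^ (-(1:ℝ)/2) = (2:ℝ) ^ ((1:ℝ)/2) * ((k:ℝ)+1) ^ (-(1:ℝ)/2) := by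
        rw [Real.div_rpow hk1.le (by norm_num), div_eq_mul_inv, hinv]; ring
      linarith
    have hfa2 : ((k:ℝ)+1+(j:ℝ)+1) ^ (-(1:ℝ)/2) ≤ ((k:ℝ)+1) ^ (-(1:ℝ)/2) :=
      Real.rpow_le_rpow_of_nonpos hk1 (by linarith) (by norm_num)
    have hj1b : (j:ℝ)+1 ≤ ((k:ℝ)+1) ^ ((1:ℝ)/2+ε) := by
      have h1 : (n:ℝ) ^ ((1:ℝ)/2+ε) ≤ ((k:ℝ)+1) ^ ((1:ℝ)/2+ε) :=
        Real.rpow_le_rpow (Nat.cast_nonneg n) (by linarith) hσ0.le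
      linarith
    have hfa3 : ((j:ℝ)+1) ^ (-(1:ℝ)) ≤ ((k:ℝ)+1) ^ (((1:ℝ)/2+ε)*β) * ((j:ℝ)+1) ^ (-(1+β)) := by
      have e1 : ((j:ℝ)+1) ^ (-(1:ℝ)) = ((j:ℝ)+1) ^ β * ((j:ℝ)+1) ^ (-(1+β)) := by
        rw [← Real.rpow_add hj1]; congr 1; ring
      have e2 : ((j:ℝ)+1) ^ β ≤ (((k:ℝ)+1) ^ ((1:ℝ)/2+ε)) ^ β :=
        Real.rpow_le_rpow (by positivity) hj1b hβ0.le
      have e3 : (((k:ℝ)+1) ^ ((1:ℝ)/2+ε)) ^ β = ((k:ℝ)+1) ^ (((1:ℝ)/2+ε)*β) := by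
        rw [← Real.rpow_mul hk1.le]
      rw [e1]
      exact mul_le_mul_of_nonneg_right (e2.trans_eq e3) (Real.rpow_nonneg hj1.le _)
    have hwb : (k:ℝ) - (n:ℝ) + 1 ≤ ((k:ℝ)+1) ^ ((1:ℝ)/2+ε) := by
      have h1 : (n:ℝ) ^ ((1:ℝ)/2+ε) ≤ ((k:ℝ)+1) ^ ((1:ℝ)/2+ε) :=
        Real.rpow_le_rpow (Nat.cast_nonneg n) (by linarith) hσ0.le
      linarith
    have hfa4 : (1:ℝ) ≤ ((k:ℝ)+1) ^ (((1:ℝ)/2+ε)/2) * ((k:ℝ)-(n:ℝ)+1) ^ (-(1:ℝ)/2) := by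
      have e1 : ((k:ℝ)-(n:ℝ)+1) ^ ((1:ℝ)/2) ≤ (((k:ℝ)+1) ^ ((1:ℝ)/2+ε)) ^ ((1:ℝ)/2) :=
        Real.rpow_le_rpow hw.le hwb (by norm_num)
      have e2 : (((k:ℝ)+1) ^ ((1:ℝ)/2+ε)) ^ ((1:ℝ)/2) = ((k:ℝ)+1) ^ (((1:ℝ)/2+ε)/2) := by
        rw [← Real.rpow_mul hk1.le]; congr 1; ring
      have e3 : ((k:ℝ)-(n:ℝ)+1) ^ ((1:ℝ)/2) * ((k:ℝ)-(n:ℝ)+1) ^ (-(1:ℝ)/2) = 1 := by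
        rw [← Real.rpow_add hw]; norm_num
      calc (1:ℝ) = ((k:ℝ)-(n:ℝ)+1) ^ ((1:ℝ)/2) * ((k:ℝ)-(n:ℝ)+1) ^ (-(1:ℝ)/2) := e3.symm
        _ ≤ _ := mul_le_mul_of_nonneg_right (e1.trans_eq e2) (Real.rpow_nonneg hw.le _)
    have h2half : (2:ℝ) ^ ((1:ℝ)/2) ≤ 2 := by
      calc (2:ℝ) ^ ((1:ℝ)/2) ≤ (2:ℝ) ^ (1:ℝ) :=
            Real.rpow_le_rpow_of_exponent_le one_le_two (by norm_num)
        _ = 2 := Real.rpow_one 2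
    have ha := hb1 n (k+1+j)
    rw [hM1] at ha
    have hcomb : ((k:ℝ)+1) ^ (-(1:ℝ)/2) * ((k:ℝ)+1) ^ (-(1:ℝ)/2)
        * ((k:ℝ)+1) ^ (((1:ℝ)/2+ε)*β) * ((k:ℝ)+1) ^ (((1:ℝ)/2+ε)/2)
        = ((k:ℝ)+1) ^ (-1 + ((1:ℝ)/2+ε)*β + ((1:ℝ)/2+ε)/2) := by
      rw [← Real.rpow_add hk1, ← Real.rpow_add hk1, ← Real.rpow_add hk1]
      congr 1; ring
    calc a n (k+1+j) / ((k:ℝ)+1+(j:ℝ)-(n:ℝ))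
        ≤ (C * ((n:ℝ)+1) ^ (-(1:ℝ)/2) * ((k:ℝ)+1+(j:ℝ)+1) ^ (-(1:ℝ)/2)) / ((j:ℝ)+1) :=
          div_le_div₀ (by positivity) ha hj1 hD
      _ = C * ((n:ℝ)+1) ^ (-(1:ℝ)/2) * ((k:ℝ)+1+(j:ℝ)+1) ^ (-(1:ℝ)/2) * ((j:ℝ)+1) ^ (-(1:ℝ)) := by
          rw [Real.rpow_neg_one]; ring
      _ ≤ C * ((2:ℝ) ^ ((1:ℝ)/2) * ((k:ℝ)+1) ^ (-(1:ℝ)/2)) * ((k:ℝ)+1) ^ (-(1:ℝ)/2)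
            * (((k:ℝ)+1) ^ (((1:ℝ)/2+ε)*β) * ((j:ℝ)+1) ^ (-(1+β))) := by
          have m1 : C * ((n:ℝ)+1) ^ (-(1:ℝ)/2) ≤ C * ((2:ℝ) ^ ((1:ℝ)/2) * ((k:ℝ)+1) ^ (-(1:ℝ)/2)) :=
            mul_le_mul_of_nonneg_left hfa1 hC.le
          have m2 : C * ((n:ℝ)+1) ^ (-(1:ℝ)/2) * ((k:ℝ)+1+(j:ℝ)+1) ^ (-(1:ℝ)/2)
              ≤ C * ((2:ℝ) ^ ((1:ℝ)/2) * ((k:ℝ)+1) ^ (-(1:ℝ)/2)) * ((k:ℝ)+1) ^ (-(1:ℝ)/2) :=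
            mul_le_mul m1 hfa2 (Real.rpow_nonneg hMpos.le _) (by positivity)
          exact mul_le_mul m2 hfa3 (Real.rpow_nonneg hj1.le _) (by positivity)
      _ ≤ C * ((2:ℝ) ^ ((1:ℝ)/2) * ((k:ℝ)+1) ^ (-(1:ℝ)/2)) * ((k:ℝ)+1) ^ (-(1:ℝ)/2)
            * (((k:ℝ)+1) ^ (((1:ℝ)/2+ε)*β) * ((j:ℝ)+1) ^ (-(1+β)))
            * (((k:ℝ)+1) ^ (((1:ℝ)/2+ε)/2) * ((k:ℝ)-(n:ℝ)+1) ^ (-(1:ℝ)/2)) := by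
          apply le_mul_of_one_le_right _ hfa4
          positivity
      _ = C * ((2:ℝ) ^ ((1:ℝ)/2) * (((k:ℝ)+1) ^ (-(1:ℝ)/2) * ((k:ℝ)+1) ^ (-(1:ℝ)/2)
            * ((k:ℝ)+1) ^ (((1:ℝ)/2+ε)*β) * ((k:ℝ)+1) ^ (((1:ℝ)/2+ε)/2))
            * ((k:ℝ)-(n:ℝ)+1) ^ (-(1:ℝ)/2)) * ((j:ℝ)+1) ^ (-(1+β)) := by ring
      _ = C * ((2:ℝ) ^ ((1:ℝ)/2) * ((k:ℝ)+1) ^ (-1 + ((1:ℝ)/2+ε)*β + ((1:ℝ)/2+ε)/2)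
            * ((k:ℝ)-(n:ℝ)+1) ^ (-(1:ℝ)/2)) * ((j:ℝ)+1) ^ (-(1+β)) := by
          rw [← hcomb]
      _ ≤ _ := by
          apply mul_le_mul_of_nonneg_right _ (Real.rpow_nonneg hj1.le _)
          apply mul_le_mul_of_nonneg_left _ hC.le
          have hx : (0:ℝ) ≤ ((k:ℝ)+1) ^ (-1 + ((1:ℝ)/2+ε)*β + ((1:ℝ)/2+ε)/2)
              * ((k:ℝ)-(n:ℝ)+1) ^ (-(1:ℝ)/2) := by
            have := Real.rpow_nonneg hw.le (-(1:ℝ)/2)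
            have := Real.rpow_nonneg hk1.le (-1 + ((1:ℝ)/2+ε)*β + ((1:ℝ)/2+ε)/2)
            positivity
          have hG1 : (0:ℝ) ≤ ((n:ℝ)+1) ^ (-(1:ℝ)/2 - ε/2) * ((k:ℝ)+1) ^ (-((1:ℝ)/2 - β)) := by
            positivity
          nlinarith [mul_le_mul_of_nonneg_right h2half hx]

/-- Let `ε ∈ (0,1/2)` and `a_{nm} ≥ 0` satisfy `a_{nm} ≤ C(n+1)^{-1/2}(m+1)^{-1/2}` always
and `a_{nm} ≤ C(n+1)^{-1/2-ε/2}(m+1)^{-1/2}` whenever `m ≥ n + n^{1/2+ε}`. Then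
`S_k = Σ_{n=0}^k Σ_{m=k+1}^∞ a_{nm}/(m-n)` converges and `S_k → 0` as `k → ∞`. -/
theorem stmt17 (ε : ℝ) (hε : ε ∈ Set.Ioo (0 : ℝ) (1 / 2)) (a : ℕ → ℕ → ℝ)
    (hpos : ∀ n m : ℕ, 0 ≤ a n m) (C : ℝ) (hC : 0 < C)
    (hb1 : ∀ n m : ℕ,
      a n m ≤ C * ((n : ℝ) + 1) ^ (-(1 : ℝ) / 2) * ((m : ℝ) + 1) ^ (-(1 : ℝ) / 2))
    (hb2 : ∀ n m : ℕ, (n : ℝ) + (n : ℝ) ^ ((1 : ℝ) / 2 + ε) ≤ (m : ℝ) →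
      a n m ≤ C * ((n : ℝ) + 1) ^ (-(1 : ℝ) / 2 - ε / 2) * ((m : ℝ) + 1) ^ (-(1 : ℝ) / 2)) :
    (∀ k : ℕ, ∀ n ≤ k,
      Summable (fun j : ℕ => a n (k + 1 + j) / ((k : ℝ) + 1 + (j : ℝ) - (n : ℝ)))) ∧
    Filter.Tendsto (fun k : ℕ =>
        ∑ n ∈ Finset.range (k + 1),
          ∑' j : ℕ, a n (k + 1 + j) / ((k : ℝ) + 1 + (j : ℝ) - (n : ℝ)))
      Filter.atTop (nhds 0) := by
  obtain ⟨hε0, hε2⟩ := hε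
  have hterm_nonneg : ∀ k n j : ℕ, n ≤ k →
      (0:ℝ) ≤ a n (k+1+j) / ((k:ℝ)+1+(j:ℝ)-(n:ℝ)) := by
    intro k n j hn
    have hnk : (n:ℝ) ≤ (k:ℝ) := Nat.cast_le.2 hn
    have hj0 : (0:ℝ) ≤ (j:ℝ) := Nat.cast_nonneg j
    exact div_nonneg (hpos _ _) (by linarith)
  have hsum32 : Summable (fun j : ℕ => C * ((j:ℝ)+1) ^ (-(3:ℝ)/2)) :=
    (summable_shift_rpow (-(3:ℝ)/2) (by norm_num)).mul_left C
  have hbound32 : ∀ k n j : ℕ, n ≤ k →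
      a n (k+1+j) / ((k:ℝ)+1+(j:ℝ)-(n:ℝ)) ≤ C * ((j:ℝ)+1) ^ (-(3:ℝ)/2) := by
    intro k n j hn
    have hnk : (n:ℝ) ≤ (k:ℝ) := Nat.cast_le.2 hn
    have hj0 : (0:ℝ) ≤ (j:ℝ) := Nat.cast_nonneg j
    have hk0 : (0:ℝ) ≤ (k:ℝ) := Nat.cast_nonneg k
    have hn0 : (0:ℝ) ≤ (n:ℝ) := Nat.cast_nonneg n
    have hj1 : (0:ℝ) < (j:ℝ)+1 := by linarith
    have hD : (j:ℝ)+1 ≤ (k:ℝ)+1+(j:ℝ)-(n:ℝ) := by linarith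
    have ha := hb1 n (k+1+j)
    rw [show ((k+1+j:ℕ):ℝ)+1 = (k:ℝ)+1+(j:ℝ)+1 by push_cast; ring] at ha
    have h1 : ((n:ℝ)+1) ^ (-(1:ℝ)/2) ≤ 1 :=
      Real.rpow_le_one_of_one_le_of_nonpos (by linarith) (by norm_num)
    have h2 : ((k:ℝ)+1+(j:ℝ)+1) ^ (-(1:ℝ)/2) ≤ ((j:ℝ)+1) ^ (-(1:ℝ)/2) :=
      Real.rpow_le_rpow_of_nonpos hj1 (by linarith) (by norm_num)
    have ha2 : a n (k+1+j) ≤ C * ((j:ℝ)+1) ^ (-(1:ℝ)/2) := by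
      calc a n (k+1+j) ≤ C * ((n:ℝ)+1) ^ (-(1:ℝ)/2) * ((k:ℝ)+1+(j:ℝ)+1) ^ (-(1:ℝ)/2) := ha
        _ ≤ C * 1 * ((j:ℝ)+1) ^ (-(1:ℝ)/2) :=
            mul_le_mul (mul_le_mul_of_nonneg_left h1 hC.le) h2
              (Real.rpow_nonneg (by linarith) _) (by positivity)
        _ = C * ((j:ℝ)+1) ^ (-(1:ℝ)/2) := by ring
    calc a n (k+1+j) / ((k:ℝ)+1+(j:ℝ)-(n:ℝ))
        ≤ (C * ((j:ℝ)+1) ^ (-(1:ℝ)/2)) / ((j:ℝ)+1) := div_le_div₀ (by positivity) ha2 hj1 hD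
      _ = C * (((j:ℝ)+1) ^ (-(1:ℝ)/2) * ((j:ℝ)+1) ^ (-(1:ℝ))) := by
          rw [Real.rpow_neg_one]; ring
      _ = C * ((j:ℝ)+1) ^ (-(3:ℝ)/2) := by
          rw [← Real.rpow_add hj1]; norm_num
  have part1 : ∀ k : ℕ, ∀ n ≤ k,
      Summable (fun j : ℕ => a n (k+1+j) / ((k:ℝ)+1+(j:ℝ)-(n:ℝ))) := by
    intro k n hn
    exact Summable.of_nonneg_of_le (fun j => hterm_nonneg k n j hn)
      (fun j => hbound32 k n j hn) hsum32
  refine ⟨part1, ?_⟩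
  -- set up constants
  set β : ℝ := min ε (1/2 - ε) / 4 with hβdef
  have hmin : 0 < min ε (1/2 - ε) := lt_min hε0 (by linarith)
  have hβ0 : 0 < β := by rw [hβdef]; linarith
  have hβe : β ≤ ε/4 := by
    have := min_le_left ε (1/2 - ε); rw [hβdef]; linarith
  have hβe' : β ≤ (1/2-ε)/4 := by
    have := min_le_right ε (1/2 - ε); rw [hβdef]; linarith
  have hβh : β ≤ 1/8 := by linarith
  have hZsum : Summable (fun j : ℕ => ((j:ℝ)+1) ^ (-(1+β))) :=
    summable_shift_rpow _ (by linarith)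
  set Z : ℝ := ∑' j : ℕ, ((j:ℝ)+1) ^ (-(1+β)) with hZdef
  have hZ0 : 0 ≤ Z :=
    tsum_nonneg (fun j => Real.rpow_nonneg (by positivity) _)
  -- per-n tsum bound
  have htsum : ∀ k n : ℕ, n ≤ k →
      (∑' j : ℕ, a n (k+1+j) / ((k:ℝ)+1+(j:ℝ)-(n:ℝ))) ≤
        C * ( ((n:ℝ)+1) ^ (-(1:ℝ)/2 - ε/2) * ((k:ℝ)+1) ^ (-((1:ℝ)/2 - β))
            + 2 * ((k:ℝ)+1) ^ (-1 + ((1:ℝ)/2+ε)*β + ((1:ℝ)/2+ε)/2)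
                * ((k:ℝ) - (n:ℝ) + 1) ^ (-(1:ℝ)/2) ) * Z := by
    intro k n hn
    have hle := fun j => pointwise_bound ε β C hε0 hε2 hβ0 hβh a hpos hC hb1 hb2 k n j hn
    have hsg : Summable (fun j : ℕ =>
        C * ( ((n:ℝ)+1) ^ (-(1:ℝ)/2 - ε/2) * ((k:ℝ)+1) ^ (-((1:ℝ)/2 - β))
            + 2 * ((k:ℝ)+1) ^ (-1 + ((1:ℝ)/2+ε)*β + ((1:ℝ)/2+ε)/2)
                * ((k:ℝ) - (n:ℝ) + 1) ^ (-(1:ℝ)/2) ) * ((j:ℝ)+1) ^ (-(1+β))) :=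
      hZsum.mul_left _
    calc (∑' j : ℕ, a n (k+1+j) / ((k:ℝ)+1+(j:ℝ)-(n:ℝ)))
        ≤ ∑' j : ℕ, C * ( ((n:ℝ)+1) ^ (-(1:ℝ)/2 - ε/2) * ((k:ℝ)+1) ^ (-((1:ℝ)/2 - β))
            + 2 * ((k:ℝ)+1) ^ (-1 + ((1:ℝ)/2+ε)*β + ((1:ℝ)/2+ε)/2)
                * ((k:ℝ) - (n:ℝ) + 1) ^ (-(1:ℝ)/2) ) * ((j:ℝ)+1) ^ (-(1+β)) :=
          Summable.tsum_le_tsum hle (part1 k n hn) hsg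
      _ = _ := tsum_mul_left
  -- overall sum bound
  have hsum_le : ∀ k : ℕ,
      (∑ n ∈ Finset.range (k+1), ∑' j : ℕ, a n (k+1+j) / ((k:ℝ)+1+(j:ℝ)-(n:ℝ))) ≤
        C * Z * ( ((k:ℝ)+1) ^ (β - ε/2) * ((1:ℝ)/2 - ε/2)⁻¹
          + 4 * ((k:ℝ)+1) ^ (-1 + ((1:ℝ)/2+ε)*β + ((1:ℝ)/2+ε)/2 + 1/2) ) := by
    intro k
    have hk1 : (0:ℝ) < (k:ℝ)+1 := by positivity
    have hs1 : (0:ℝ) < (1:ℝ)/2 + ε/2 := by linarith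
    have hs2 : (1:ℝ)/2 + ε/2 < 1 := by linarith
    have hsumG1 : ∑ n ∈ Finset.range (k+1), ((n:ℝ)+1) ^ (-(1:ℝ)/2 - ε/2)
        ≤ ((k:ℝ)+1) ^ ((1:ℝ)/2 - ε/2) / ((1:ℝ)/2 - ε/2) := by
      have h := sum_rpow_le ((1:ℝ)/2 + ε/2) hs1 hs2 k
      have e1 : -((1:ℝ)/2 + ε/2) = -(1:ℝ)/2 - ε/2 := by ring
      have e2 : 1 - ((1:ℝ)/2 + ε/2) = (1:ℝ)/2 - ε/2 := by ring
      rw [e1, e2] at h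
      exact h
    have hsumG2 : ∑ n ∈ Finset.range (k+1), ((k:ℝ)-(n:ℝ)+1) ^ (-(1:ℝ)/2)
        ≤ 2 * ((k:ℝ)+1) ^ ((1:ℝ)/2) := by
      rw [reflect_sum]
      have h := sum_rpow_le ((1:ℝ)/2) (by norm_num) (by norm_num) k
      have e1 : -((1:ℝ)/2) = -(1:ℝ)/2 := by ring
      have e2 : 1 - (1:ℝ)/2 = (1:ℝ)/2 := by ring
      rw [e1, e2] at h
      calc ∑ n ∈ Finset.range (k+1), ((n:ℝ)+1) ^ (-(1:ℝ)/2)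
          ≤ ((k:ℝ)+1) ^ ((1:ℝ)/2) / ((1:ℝ)/2) := h
        _ = 2 * ((k:ℝ)+1) ^ ((1:ℝ)/2) := by ring
    calc (∑ n ∈ Finset.range (k+1), ∑' j : ℕ, a n (k+1+j) / ((k:ℝ)+1+(j:ℝ)-(n:ℝ)))
        ≤ ∑ n ∈ Finset.range (k+1),
            C * ( ((n:ℝ)+1) ^ (-(1:ℝ)/2 - ε/2) * ((k:ℝ)+1) ^ (-((1:ℝ)/2 - β))
              + 2 * ((k:ℝ)+1) ^ (-1 + ((1:ℝ)/2+ε)*β + ((1:ℝ)/2+ε)/2)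
                  * ((k:ℝ) - (n:ℝ) + 1) ^ (-(1:ℝ)/2) ) * Z :=
          Finset.sum_le_sum (fun n hn =>
            htsum k n (Nat.lt_succ_iff.mp (Finset.mem_range.mp hn)))
      _ = C * Z * ((∑ n ∈ Finset.range (k+1), ((n:ℝ)+1) ^ (-(1:ℝ)/2 - ε/2))
              * ((k:ℝ)+1) ^ (-((1:ℝ)/2 - β))
            + 2 * ((k:ℝ)+1) ^ (-1 + ((1:ℝ)/2+ε)*β + ((1:ℝ)/2+ε)/2)
              * (∑ n ∈ Finset.range (k+1), ((k:ℝ)-(n:ℝ)+1) ^ (-(1:ℝ)/2))) := by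
          rw [Finset.sum_mul, Finset.mul_sum, ← Finset.sum_add_distrib, Finset.mul_sum]
          apply Finset.sum_congr rfl
          intro n _
          ring
      _ ≤ C * Z * (((k:ℝ)+1) ^ ((1:ℝ)/2 - ε/2) / ((1:ℝ)/2 - ε/2)
              * ((k:ℝ)+1) ^ (-((1:ℝ)/2 - β))
            + 2 * ((k:ℝ)+1) ^ (-1 + ((1:ℝ)/2+ε)*β + ((1:ℝ)/2+ε)/2)
              * (2 * ((k:ℝ)+1) ^ ((1:ℝ)/2))) := by
          apply mul_le_mul_of_nonneg_left _ (by positivity)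
          apply add_le_add
          · exact mul_le_mul_of_nonneg_right hsumG1 (Real.rpow_nonneg hk1.le _)
          · apply mul_le_mul_of_nonneg_left hsumG2
            have := Real.rpow_nonneg hk1.le (-1 + ((1:ℝ)/2+ε)*β + ((1:ℝ)/2+ε)/2)
            positivity
      _ = C * Z * ( ((k:ℝ)+1) ^ (β - ε/2) * ((1:ℝ)/2 - ε/2)⁻¹
            + 4 * ((k:ℝ)+1) ^ (-1 + ((1:ℝ)/2+ε)*β + ((1:ℝ)/2+ε)/2 + 1/2) ) := by
          have e1 : ((k:ℝ)+1) ^ ((1:ℝ)/2 - ε/2) * ((k:ℝ)+1) ^ (-((1:ℝ)/2 - β))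
              = ((k:ℝ)+1) ^ (β - ε/2) := by
            rw [← Real.rpow_add hk1]; congr 1; ring
          have e2 : ((k:ℝ)+1) ^ (-1 + ((1:ℝ)/2+ε)*β + ((1:ℝ)/2+ε)/2) * ((k:ℝ)+1) ^ ((1:ℝ)/2)
              = ((k:ℝ)+1) ^ (-1 + ((1:ℝ)/2+ε)*β + ((1:ℝ)/2+ε)/2 + 1/2) := by
            rw [← Real.rpow_add hk1]
          rw [← e1, ← e2]; ring
  -- tendsto
  have hten : ∀ c : ℝ, c < 0 →
      Filter.Tendsto (fun k : ℕ => ((k:ℝ)+1) ^ c) Filter.atTop (nhds 0) := by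
    intro c hc
    have h1 : Filter.Tendsto (fun k : ℕ => (k:ℝ)+1) Filter.atTop Filter.atTop :=
      Filter.tendsto_atTop_add_const_right _ 1 tendsto_natCast_atTop_atTop
    have h2 := (tendsto_rpow_neg_atTop (show (0:ℝ) < -c by linarith)).comp h1
    simpa [Function.comp_def] using h2
  have c1 : β - ε/2 < 0 := by linarith
  have c2 : -1 + ((1:ℝ)/2+ε)*β + ((1:ℝ)/2+ε)/2 + 1/2 < 0 := by nlinarith
  have hg0 : Filter.Tendsto (fun k : ℕ =>
      C * Z * ( ((k:ℝ)+1) ^ (β - ε/2) * ((1:ℝ)/2 - ε/2)⁻¹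
        + 4 * ((k:ℝ)+1) ^ (-1 + ((1:ℝ)/2+ε)*β + ((1:ℝ)/2+ε)/2 + 1/2) ))
      Filter.atTop (nhds 0) := by
    have t1 := (hten _ c1).mul_const ((1:ℝ)/2 - ε/2)⁻¹
    have t2 := (hten _ c2).const_mul (4:ℝ)
    have t3 := (t1.add t2).const_mul (C * Z)
    simpa using t3
  have hnonneg : ∀ k : ℕ,
      (0:ℝ) ≤ ∑ n ∈ Finset.range (k+1), ∑' j : ℕ, a n (k+1+j) / ((k:ℝ)+1+(j:ℝ)-(n:ℝ)) := by
    intro k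
    apply Finset.sum_nonneg
    intro n hn
    exact tsum_nonneg (fun j => hterm_nonneg k n j (Nat.lt_succ_iff.mp (Finset.mem_range.mp hn)))
  exact squeeze_zero hnonneg hsum_le hg0
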